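/- Given a short exact sequence 0 → K → G → H → 0 where K is left-ordered and H is circularly-ordered, the group G admits a left-invariant circular order such that the quotient map G → H is monotone. -/

import Mathlib

/-- A circular order on `S`, following Calegari: for each `p` a strict total
order on `S \ {p}`, any two of which differ by a cut, together with the
three-element (cyclicity) condition. `o p x y` means `x <_p y`. -/
def IsCircularOrderFam {S : Type*} (o : S → S → S → Prop) : Prop :=
  (∀ p x y, o p x y → x ≠ p ∧ y ≠ p ∧ x ≠ y) ∧
  (∀ p x y, x ≠ p → y ≠ p → x ≠ y → o p x y ∨ o p y x) ∧
  (∀ p x y, o p x y → ¬ o p y x) ∧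
  (∀ p x y z, o p x y → o p y z → o p x z) ∧
  (∀ p x y, o p x y → o y p x) ∧
  (∀ p q x y, p ≠ q → x ≠ p → x ≠ q → y ≠ p → y ≠ q → x ≠ y →
    ((o p x q → o p q y → o q y x) ∧ (o p x y → ¬(o p x q ∧ o p q y) → o q x y)))

/-- A ternary cyclic-order relation (nonequal, cyclic, asymmetric, transitive,
total) gives a circular order family. -/
theorem circ_of_axioms {S : Type*} (c : S → S → S → Prop)
    (hne : ∀ a b d, c a b d → a ≠ b ∧ b ≠ d ∧ a ≠ d)
    (hcyc : ∀ a b d, c a b d → c b d a)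
    (hasym : ∀ a b d, c a b d → ¬ c a d b)
    (htrans : ∀ a b d e, c a b d → c a d e → c a b e)
    (htot : ∀ a b d, a ≠ b → b ≠ d → a ≠ d → c a b d ∨ c a d b) :
    IsCircularOrderFam c := by
  refine ⟨?_, ?_, ?_, ?_, ?_, ?_⟩
  · intro p x y h
    obtain ⟨h1, h2, h3⟩ := hne _ _ _ h
    exact ⟨h1.symm, h3.symm, h2⟩
  · intro p x y hxp hyp hxy
    exact htot p x y (Ne.symm hxp) hxy (Ne.symm hyp)
  · intro p x y h
    exact hasym _ _ _ h
  · intro p x y z h1 h2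
    exact htrans _ _ _ _ h1 h2
  · intro p x y h
    exact hcyc _ _ _ (hcyc _ _ _ h)
  · intro p q x y hpq hxp hxq hyp hyq hxy
    constructor
    · intro h1 h2
      have a1 : c q p x := hcyc _ _ _ (hcyc _ _ _ h1)
      have a2 : c q y p := hcyc _ _ _ h2
      exact htrans _ _ _ _ a2 a1
    · intro hpxy hnot
      rcases htot q x y (Ne.symm hxq) hxy (Ne.symm hyq) with h | h
      · exact h
      · exfalso
        rcases htot p x q (Ne.symm hxp) hxq hpq with h1 | h1
        · rcases htot p q y hpq (Ne.symm hyq) (Ne.symm hyp) with h2 | h2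
          · exact hnot ⟨h1, h2⟩
          · have b1 : c y x q := hcyc _ _ _ h
            have b2 : c y q p := hcyc _ _ _ h2
            have b3 : c y x p := htrans _ _ _ _ b1 b2
            exact hasym _ _ _ hpxy (hcyc _ _ _ (hcyc _ _ _ b3))
        · have b1 : c x p q := hcyc _ _ _ (hcyc _ _ _ h1)
          have b2 : c x y p := hcyc _ _ _ hpxy
          have b3 : c x y q := htrans _ _ _ _ b2 b1
          exact hasym _ _ _ (hcyc _ _ _ (hcyc _ _ _ b3)) h

section CycConstruction

variable {G H : Type*} (φ : G → H) (oH : H → H → H → Prop) (s : G → G → Prop)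

/-- The ternary relation on `G` built from the circular order on `H` (for
triples with pairwise distinct images) and the fiberwise linear order `s`. -/
def cOrd : G → G → G → Prop := fun p x y =>
  (φ p ≠ φ x ∧ φ x ≠ φ y ∧ φ p ≠ φ y ∧ oH (φ p) (φ x) (φ y)) ∨
  (φ p = φ x ∧ φ x ≠ φ y ∧ s p x) ∨
  (φ x = φ y ∧ φ p ≠ φ x ∧ s x y) ∨
  (φ p = φ y ∧ φ y ≠ φ x ∧ s y p) ∨
  (φ p = φ x ∧ φ x = φ y ∧
    ((s p x ∧ s x y) ∨ (s x y ∧ s y p) ∨ (s y p ∧ s p x)))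

theorem cOrd_ne
    (hsir : ∀ a, ¬ s a a)
    (hstr : ∀ a b d, s a b → s b d → s a d) :
    ∀ a b d, cOrd φ oH s a b d → a ≠ b ∧ b ≠ d ∧ a ≠ d := by
  have hsne : ∀ a b, s a b → a ≠ b := by
    rintro a b h rfl; exact hsir a h
  rintro p x y (⟨n1, n2, n3, _⟩ | ⟨e1, n1, hs1⟩ | ⟨e1, n1, hs1⟩ | ⟨e1, n1, hs1⟩ | ⟨e1, e2, h5⟩)
  · refine ⟨?_, ?_, ?_⟩ <;> rintro rfl <;> simp_all
  · refine ⟨hsne _ _ hs1, ?_, ?_⟩ <;> rintro rfl <;> simp_all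
  · refine ⟨?_, hsne _ _ hs1, ?_⟩ <;> rintro rfl <;> simp_all
  · refine ⟨?_, ?_, (hsne _ _ hs1).symm⟩ <;> rintro rfl <;> simp_all
  · rcases h5 with ⟨a1, a2⟩ | ⟨a1, a2⟩ | ⟨a1, a2⟩
    · exact ⟨hsne _ _ a1, hsne _ _ a2, hsne _ _ (hstr _ _ _ a1 a2)⟩
    · exact ⟨(hsne _ _ (hstr _ _ _ a1 a2)).symm, hsne _ _ a1, (hsne _ _ a2).symm⟩
    · exact ⟨hsne _ _ a2, (hsne _ _ (hstr _ _ _ a1 a2)).symm, (hsne _ _ a1).symm⟩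

theorem cOrd_cyc
    (hcycH : ∀ p x y, oH p x y → oH y p x) :
    ∀ a b d, cOrd φ oH s a b d → cOrd φ oH s b d a := by
  rintro p x y (⟨n1, n2, n3, ho⟩ | ⟨e1, n1, hs1⟩ | ⟨e1, n1, hs1⟩ | ⟨e1, n1, hs1⟩ | ⟨e1, e2, h5⟩)
  · exact Or.inl ⟨n2, fun h => n3 h.symm, fun h => n1 h.symm,
      hcycH _ _ _ (hcycH _ _ _ ho)⟩
  · -- goal on (x, y, p): 1st = 3rd pattern
    refine Or.inr (Or.inr (Or.inr (Or.inl ⟨e1.symm, ?_, hs1⟩)))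
    intro h; exact n1 (e1.symm.trans h)
  · refine Or.inr (Or.inl ⟨e1, ?_, hs1⟩)
    intro h; exact n1 (h.symm.trans e1.symm)
  · refine Or.inr (Or.inr (Or.inl ⟨e1.symm, ?_, hs1⟩))
    intro h; exact n1 h.symm
  · exact Or.inr (Or.inr (Or.inr (Or.inr ⟨e2, e2.symm.trans e1.symm, by tauto⟩)))

theorem cOrd_asym
    (hsir : ∀ a, ¬ s a a)
    (hstr : ∀ a b d, s a b → s b d → s a d)
    (hasymH : ∀ p x y, oH p x y → ¬ oH p y x) :
    ∀ a b d, cOrd φ oH s a b d → ¬ cOrd φ oH s a d b := by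
  have hsas : ∀ a b, s a b → ¬ s b a := fun a b h1 h2 => hsir a (hstr _ _ _ h1 h2)
  rintro p x y h1 h2
  obtain ⟨n1,n2,n3,ho1⟩|⟨e1,n1,hs1⟩|⟨e1,n1,hs1⟩|⟨e1,n1,hs1⟩|⟨e1,e2,h5⟩ := h1 <;>
    obtain ⟨m1,m2,m3,ho2⟩|⟨f1,m1,ht1⟩|⟨f1,m1,ht1⟩|⟨f1,m1,ht1⟩|⟨f1,f2,h6⟩ := h2 <;>
    try exact hasymH _ _ _ ho1 ho2
  all_goals try exact hsas _ _ hs1 ht1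
  all_goals try grind
  all_goals try exact m1 (e1.trans e2)
  -- remaining: the double all-in-one-fiber case
  all_goals
    rcases h5 with ⟨u1,u2⟩|⟨u1,u2⟩|⟨u1,u2⟩ <;> rcases h6 with ⟨v1,v2⟩|⟨v1,v2⟩|⟨v1,v2⟩ <;>
      first
      | exact hsas _ _ u1 v1 | exact hsas _ _ u1 v2
      | exact hsas _ _ u2 v1 | exact hsas _ _ u2 v2

theorem cOrd_tot
    (hst : ∀ a b, φ a = φ b → a ≠ b → s a b ∨ s b a)
    (htotH : ∀ p x y : H, x ≠ p → y ≠ p → x ≠ y → oH p x y ∨ oH p y x) :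
    ∀ a b d : G, a ≠ b → b ≠ d → a ≠ d →
      cOrd φ oH s a b d ∨ cOrd φ oH s a d b := by
  intro p x y hpx hxy hpy
  unfold cOrd
  by_cases e1 : φ p = φ x <;> by_cases e2 : φ x = φ y <;> by_cases e3 : φ p = φ y
  · rcases hst p x e1 hpx with t1 | t1 <;>
      rcases hst p y e3 hpy with t2 | t2 <;>
      rcases hst x y e2 hxy with t3 | t3
    · exact Or.inl (Or.inr (Or.inr (Or.inr (Or.inr ⟨e1, e2, Or.inl ⟨t1, t3⟩⟩))))
    · exact Or.inr (Or.inr (Or.inr (Or.inr (Or.inr ⟨e3, e2.symm, Or.inl ⟨t2, t3⟩⟩))))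
    · exact Or.inl (Or.inr (Or.inr (Or.inr (Or.inr ⟨e1, e2, Or.inr (Or.inr ⟨t2, t1⟩)⟩))))
    · exact Or.inl (Or.inr (Or.inr (Or.inr (Or.inr ⟨e1, e2, Or.inr (Or.inr ⟨t2, t1⟩)⟩))))
    · exact Or.inr (Or.inr (Or.inr (Or.inr (Or.inr ⟨e3, e2.symm, Or.inr (Or.inr ⟨t1, t2⟩)⟩))))
    · exact Or.inr (Or.inr (Or.inr (Or.inr (Or.inr ⟨e3, e2.symm, Or.inr (Or.inr ⟨t1, t2⟩)⟩))))
    · exact Or.inl (Or.inr (Or.inr (Or.inr (Or.inr ⟨e1, e2, Or.inr (Or.inl ⟨t3, t2⟩)⟩))))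
    · exact Or.inr (Or.inr (Or.inr (Or.inr (Or.inr ⟨e3, e2.symm, Or.inr (Or.inl ⟨t3, t1⟩)⟩))))
  · exact absurd (e1.trans e2) e3
  · exact absurd (e1.symm.trans e3) e2
  · rcases hst p x e1 hpx with t | t
    · exact Or.inl (Or.inr (Or.inl ⟨e1, e2, t⟩))
    · exact Or.inr (Or.inr (Or.inr (Or.inr (Or.inl ⟨e1, e2, t⟩))))
  · exact absurd (e3.trans e2.symm) e1
  · rcases hst x y e2 hxy with t | t
    · exact Or.inl (Or.inr (Or.inr (Or.inl ⟨e2, e1, t⟩)))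
    · exact Or.inr (Or.inr (Or.inr (Or.inl ⟨e2.symm, e3, t⟩)))
  · rcases hst p y e3 hpy with t | t
    · exact Or.inr (Or.inr (Or.inl ⟨e3, fun h => e2 h.symm, t⟩))
    · exact Or.inl (Or.inr (Or.inr (Or.inr (Or.inl ⟨e3, fun h => e2 h.symm, t⟩))))
  · rcases htotH (φ p) (φ x) (φ y) (fun h => e1 h.symm) (fun h => e3 h.symm) e2 with t | t
    · exact Or.inl (Or.inl ⟨e1, e2, e3, t⟩)
    · exact Or.inr (Or.inl ⟨e3, fun h => e2 h.symm, e1, t⟩)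

theorem cOrd_trans
    (hsir : ∀ a, ¬ s a a)
    (hstr : ∀ a b d, s a b → s b d → s a d)
    (hasymH : ∀ p x y, oH p x y → ¬ oH p y x)
    (htransH : ∀ p x y z, oH p x y → oH p y z → oH p x z) :
    ∀ a b d e, cOrd φ oH s a b d → cOrd φ oH s a d e → cOrd φ oH s a b e := by
  have hsas : ∀ a b, s a b → ¬ s b a := fun a b h1 h2 => hsir a (hstr _ _ _ h1 h2)
  rintro p x y z h1 h2
  obtain ⟨n1,n2,n3,ho1⟩|⟨e1,n1,hs1⟩|⟨e1,n1,hs1⟩|⟨e1,n1,hs1⟩|⟨e1,e2,h5⟩ := h1 <;>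
    obtain ⟨m1,m2,m3,ho2⟩|⟨f1,m1,ht1⟩|⟨f1,m1,ht1⟩|⟨f1,m1,ht1⟩|⟨f1,f2,h6⟩ := h2
  -- 1. A A'
  · by_cases exz : φ x = φ z
    · exact absurd (exz.symm ▸ ho2) (hasymH _ _ _ ho1)
    · exact Or.inl ⟨n1, exz, m3, htransH _ _ _ _ ho1 ho2⟩
  -- 2. A B'
  · exact absurd f1 n3
  -- 3. A C'
  · exact Or.inl ⟨n1, f1 ▸ n2, f1 ▸ n3, f1 ▸ ho1⟩
  -- 4. A D'
  · exact Or.inr (Or.inr (Or.inr (Or.inl ⟨f1, f1 ▸ n1, ht1⟩)))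
  -- 5. A E'
  · exact absurd f1 n3
  -- 6. B A'
  · exact Or.inr (Or.inl ⟨e1, e1 ▸ m3, hs1⟩)
  -- 7. B B'
  · exact absurd (e1.symm.trans f1) n1
  -- 8. B C'
  · exact Or.inr (Or.inl ⟨e1, f1 ▸ n1, hs1⟩)
  -- 9. B D'
  · exact Or.inr (Or.inr (Or.inr (Or.inr ⟨e1, e1.symm.trans f1,
      Or.inr (Or.inr ⟨ht1, hs1⟩)⟩)))
  -- 10. B E'
  · exact absurd (e1.symm.trans f1) n1
  -- 11. C A'
  · exact Or.inl ⟨n1, e1.symm ▸ m2, m3, e1.symm ▸ ho2⟩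
  -- 12. C B'
  · exact absurd (f1.trans e1.symm) n1
  -- 13. C C'
  · exact Or.inr (Or.inr (Or.inl ⟨e1.trans f1, n1, hstr _ _ _ hs1 ht1⟩))
  -- 14. C D'
  · exact Or.inr (Or.inr (Or.inr (Or.inl ⟨f1, f1 ▸ n1, ht1⟩)))
  -- 15. C E'
  · exact absurd (f1.trans e1.symm) n1
  -- 16. D A'
  · exact absurd e1 m1
  -- 17. D B'
  · exact absurd ht1 (hsas _ _ hs1)
  -- 18. D C'
  · exact absurd e1 m1
  -- 19. D D'
  · exact absurd (f1.symm.trans e1) m1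
  -- 20. D E'
  · rcases h6 with ⟨u,v⟩|⟨u,v⟩|⟨u,v⟩
    · exact absurd u (hsas _ _ hs1)
    · exact Or.inr (Or.inr (Or.inr (Or.inl ⟨e1.trans f2, f2 ▸ n1, v⟩)))
    · exact Or.inr (Or.inr (Or.inr (Or.inl ⟨e1.trans f2, f2 ▸ n1, u⟩)))
  -- 21. E A'
  · exact absurd (e1.trans e2) m1
  -- 22. E B'
  · rcases h5 with ⟨u,v⟩|⟨u,v⟩|⟨u,v⟩
    · exact Or.inr (Or.inl ⟨e1, e2.symm ▸ m1, u⟩)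
    · exact absurd v (hsas _ _ ht1)
    · exact Or.inr (Or.inl ⟨e1, e2.symm ▸ m1, v⟩)
  -- 23. E C'
  · exact absurd (e1.trans e2) m1
  -- 24. E D'
  · exact absurd (f1.symm.trans (e1.trans e2)) m1
  -- 25. E E'
  · rcases h5 with ⟨u1,u2⟩|⟨u1,u2⟩|⟨u1,u2⟩ <;> rcases h6 with ⟨v1,v2⟩|⟨v1,v2⟩|⟨v1,v2⟩ <;>
      first
      | exact absurd v1 (hsas _ _ u2)
      | exact absurd v2 (hsas _ _ u2)
      | exact absurd v1 (hsas _ _ u1)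
      | exact absurd v2 (hsas _ _ u1)
      | exact Or.inr (Or.inr (Or.inr (Or.inr ⟨e1, e2.trans f2,
          Or.inl ⟨u1, hstr _ _ _ u2 v2⟩⟩)))
      | exact Or.inr (Or.inr (Or.inr (Or.inr ⟨e1, e2.trans f2,
          Or.inr (Or.inr ⟨v2, u1⟩)⟩)))
      | exact Or.inr (Or.inr (Or.inr (Or.inr ⟨e1, e2.trans f2,
          Or.inr (Or.inr ⟨v1, u1⟩)⟩)))
      | exact Or.inr (Or.inr (Or.inr (Or.inr ⟨e1, e2.trans f2,
          Or.inl ⟨hstr _ _ _ u1 v1, v2⟩⟩)))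
      | exact Or.inr (Or.inr (Or.inr (Or.inr ⟨e1, e2.trans f2,
          Or.inr (Or.inl ⟨hstr _ _ _ u1 v1, v2⟩)⟩)))
      | exact Or.inr (Or.inr (Or.inr (Or.inr ⟨e1, e2.trans f2,
          Or.inr (Or.inr ⟨v2, u2⟩)⟩)))

end CycConstruction

/-- Given a short exact sequence `0 → K → G → H → 0` with `K` left-ordered and
`H` circularly-ordered, `G` admits a left-invariant circular order making the
quotient map `G → H` monotone. -/
theorem stmt9 {K G H : Type*} [Group K] [Group G] [Group H]
    (ι : K →* G) (φ : G →* H)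
    (hι : Function.Injective ι) (hφ : Function.Surjective φ)
    (hexact : ι.range = φ.ker)
    (rK : K → K → Prop)
    (hK : IsStrictTotalOrder K rK ∧ ∀ a b c : K, rK a b ↔ rK (c * a) (c * b))
    (oH : H → H → H → Prop)
    (hH : IsCircularOrderFam oH ∧ ∀ g p x y : H, oH p x y ↔ oH (g * p) (g * x) (g * y)) :
    ∃ oG : G → G → G → Prop,
      IsCircularOrderFam oG ∧
      (∀ g p x y : G, oG p x y ↔ oG (g * p) (g * x) (g * y)) ∧
      (∀ d x y : G, oG d x y →
        φ x = φ y ∨ φ x = φ d ∨ φ y = φ d ∨ oH (φ d) (φ x) (φ y)) := by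
  obtain ⟨hsto, hinv⟩ := hK
  obtain ⟨hHfam, hHinv⟩ := hH
  set s : G → G → Prop := fun a b => ∃ k : K, ι k = a⁻¹ * b ∧ rK 1 k with hsdef
  have hsir : ∀ a, ¬ s a a := by
    rintro a ⟨k, hk, hk1⟩
    rw [inv_mul_cancel] at hk
    have hk' : k = 1 := hι (by rw [hk, map_one])
    subst hk'
    exact (hsto.irrefl 1) hk1
  have hstr : ∀ a b d, s a b → s b d → s a d := by
    rintro a b d ⟨k1, hk1, p1⟩ ⟨k2, hk2, p2⟩
    refine ⟨k1 * k2, ?_, ?_⟩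
    · rw [map_mul, hk1, hk2]; group
    · have h2 : rK k1 (k1 * k2) := by
        have := (hinv 1 k2 k1).mp p2; simpa using this
      exact hsto.trans _ _ _ p1 h2
  have hst : ∀ a b : G, φ a = φ b → a ≠ b → s a b ∨ s b a := by
    intro a b hab hne
    have hker : a⁻¹ * b ∈ φ.ker := by
      rw [MonoidHom.mem_ker, map_mul, map_inv, hab, inv_mul_cancel]
    obtain ⟨k, hk⟩ : a⁻¹ * b ∈ ι.range := hexact.symm ▸ hker
    have hkne : k ≠ 1 := by
      rintro rfl
      rw [map_one] at hk
      exact hne (inv_mul_eq_one.mp hk.symm)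
    rcases (by have := hsto.trichotomous 1 k; tauto : rK 1 k ∨ 1 = k ∨ rK k 1) with h | h | h
    · exact Or.inl ⟨k, hk, h⟩
    · exact absurd h.symm hkne
    · refine Or.inr ⟨k⁻¹, ?_, ?_⟩
      · rw [map_inv, hk, mul_inv_rev, inv_inv]
      · have := (hinv k 1 k⁻¹).mp h; simpa using this
  have hsinv : ∀ g a b : G, s (g * a) (g * b) ↔ s a b := by
    intro g a b
    have key : (g * a)⁻¹ * (g * b) = a⁻¹ * b := by group
    simp only [hsdef, key]
  refine ⟨cOrd φ oH s, ?_, ?_, ?_⟩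
  · exact circ_of_axioms _
      (cOrd_ne φ oH s hsir hstr)
      (cOrd_cyc φ oH s hHfam.2.2.2.2.1)
      (cOrd_asym φ oH s hsir hstr hHfam.2.2.1)
      (cOrd_trans φ oH s hsir hstr hHfam.2.2.1 hHfam.2.2.2.1)
      (cOrd_tot φ oH s hst hHfam.2.1)
  · intro g p x y
    have heq : ∀ a b : G, φ (g * a) = φ (g * b) ↔ φ a = φ b := by
      intro a b
      rw [map_mul, map_mul]
      exact ⟨fun h => mul_left_cancel h, fun h => by rw [h]⟩
    have ho : oH (φ (g * p)) (φ (g * x)) (φ (g * y)) ↔ oH (φ p) (φ x) (φ y) := by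
      rw [map_mul, map_mul, map_mul]
      exact (hHinv (φ g) _ _ _).symm
    simp only [cOrd, ne_eq, heq, hsinv g, ho]
  · rintro d x y (⟨n1, n2, n3, ho⟩ | ⟨e1, n1, hs1⟩ | ⟨e1, n1, hs1⟩ | ⟨e1, n1, hs1⟩ | ⟨e1, e2, h5⟩)
    · exact Or.inr (Or.inr (Or.inr ho))
    · exact Or.inr (Or.inl e1.symm)
    · exact Or.inl e1
    · exact Or.inr (Or.inr (Or.inl e1.symm))
    · exact Or.inl e2
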